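/- Suppose v₂, w are functions on a square B = [x₀, x₀+c] × [y₀, y₀+c] with v₂ = ∂_x∂_y w, |v₂| ≥ m everywhere on B with v₂ of constant sign, and (∫_B |∇w|²)^{1/2} ≤ η. Then m ≤ C·η/c² for an absolute constant C. -/

import Mathlib

open MeasureTheory

open Set intervalIntegral in
lemma oneD (g : ℝ → ℝ) (a c m : ℝ) (hc : 0 < c) (hm : 0 < m)
    (hg : ∀ x ∈ Set.Icc a (a + c), m ≤ deriv g x) :
    m * c ^ 2 / 4 ≤ ∫ x in Set.Icc a (a + c), |g x| := by
  have hd : ∀ x ∈ Set.Icc a (a + c), DifferentiableAt ℝ g x := by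
    intro x hx
    by_contra h
    have := deriv_zero_of_not_differentiableAt h
    have := hg x hx
    linarith
  have hcont : ContinuousOn g (Set.Icc a (a + c)) :=
    fun x hx => ((hd x hx).continuousAt).continuousWithinAt
  have hmono : ∀ x ∈ Set.Icc a (a+c), ∀ y ∈ Set.Icc a (a+c), x ≤ y → m * (y - x) ≤ g y - g x := by
    apply (convex_Icc a (a+c)).mul_sub_le_image_sub_of_le_deriv hcont
    · exact fun x hx => (hd x (interior_subset hx)).differentiableWithinAt
    · exact fun x hx => hg x (interior_subset hx)
  set h := c / 2 with hh
  have hac : a ≤ a + c := by linarith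
  have hii : ∀ u v : ℝ, a ≤ u → v ≤ a + c → u ≤ v → IntervalIntegrable g volume u v := by
    intro u v hu hv huv
    apply (hcont.mono ?_).intervalIntegrable
    rw [Set.uIcc_of_le huv]
    exact Set.Icc_subset_Icc hu hv
  have h1 : IntervalIntegrable g volume a (a + h) := hii a (a+h) le_rfl (by linarith) (by linarith)
  have h2 : IntervalIntegrable g volume (a+h) (a + c) := hii _ _ (by linarith) le_rfl (by linarith)
  have h3 : IntervalIntegrable (fun x => g (x + h)) volume a (a + h) := by
    have heq : a + c - h = a + h := by rw [hh]; ring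
    have := IntervalIntegrable.comp_add_right h2 h
    rw [heq] at this
    have heq2 : a + h - h = a := by ring
    rwa [heq2] at this
  -- key pointwise bound
  have hkey : ∀ x ∈ Set.Icc a (a + h), m * h ≤ g (x + h) - g x := by
    intro x hx
    obtain ⟨hx1, hx2⟩ := hx
    have := hmono x ⟨hx1, by simp only [hh] at hx2 ⊢; linarith⟩ (x + h)
      ⟨by simp only [hh] at hx2 ⊢; linarith, by simp only [hh] at hx2 ⊢; linarith⟩
      (by simp only [hh]; linarith)
    simpa using this
  have hint1 : m * h * h ≤ ∫ x in a..(a+h), (g (x + h) - g x) := by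
    have := intervalIntegral.integral_mono_on (by linarith : a ≤ a + h)
      (_root_.intervalIntegrable_const (c := m * h)) (h3.sub h1) hkey
    rw [intervalIntegral.integral_const] at this
    have e : (a + h - a) • (m * h) = m * h * h := by rw [smul_eq_mul]; ring
    rwa [e] at this
  have hsplit : (∫ x in a..(a+h), (g (x + h) - g x)) =
      (∫ x in (a+h)..(a+c), g x) - ∫ x in a..(a+h), g x := by
    rw [intervalIntegral.integral_sub h3 h1]
    congr 1
    have := intervalIntegral.integral_comp_add_right (a := a) (b := a + h) g h
    rw [this]
    congr 1
    rw [hh]; ring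
  have habs1 : (∫ x in (a+h)..(a+c), g x) ≤ ∫ x in (a+h)..(a+c), |g x| := by
    apply intervalIntegral.integral_mono_on (by linarith) h2 h2.abs
    intro x _; exact le_abs_self _
  have habs2 : -(∫ x in a..(a+h), g x) ≤ ∫ x in a..(a+h), |g x| := by
    rw [← intervalIntegral.integral_neg]
    apply intervalIntegral.integral_mono_on (by linarith) h1.neg h1.abs
    intro x _
    simp only [Pi.neg_apply]
    exact neg_le_abs _
  
  have hadj : (∫ x in a..(a+h), |g x|) + (∫ x in (a+h)..(a+c), |g x|) = ∫ x in a..(a+c), |g x| :=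
    intervalIntegral.integral_add_adjacent_intervals h1.abs h2.abs
  have hfinal : m * h * h ≤ ∫ x in a..(a+c), |g x| := by
    rw [← hadj]; linarith
  have hIcc : (∫ x in Set.Icc a (a+c), |g x|) = ∫ x in a..(a+c), |g x| := by
    rw [intervalIntegral.integral_of_le hac, MeasureTheory.integral_Icc_eq_integral_Ioc]
  rw [hIcc]
  have : m * h * h = m * c ^ 2 / 4 := by rw [hh]; ring
  linarith

open Set in
lemma sliceDeriv (w : ℝ × ℝ → ℝ) (p : ℝ × ℝ) (hw : DifferentiableAt ℝ w p) :
    deriv (fun y => w (p.1, y)) p.2 = fderiv ℝ w p ((0:ℝ), (1:ℝ)) := by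
  have h1 : HasDerivAt (fun y : ℝ => ((p.1 : ℝ), y)) ((0:ℝ), (1:ℝ)) p.2 :=
    (hasDerivAt_const _ _).prodMk (hasDerivAt_id _)
  have h2 := hw.hasFDerivAt.comp_hasDerivAt (f := fun y : ℝ => ((p.1 : ℝ), y)) p.2 (by simpa using h1)
  exact h2.deriv

set_option maxHeartbeats 1000000 in
/-- If `w` is `C²` on a closed square `B` of side `c`, the mixed derivative
`v₂ = ∂_x∂_y w` has constant sign with `|v₂| ≥ m > 0` on `B`, and `(∫_B |∇w|²)^{1/2} ≤ η`,
then `m ≤ C η / c²` for an absolute constant `C`. -/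
theorem stmt_16 : ∃ C : ℝ, 0 < C ∧
    ∀ (w : ℝ × ℝ → ℝ) (x₀ y₀ c m η : ℝ),
      0 < c → 0 < m → 0 ≤ η →
      ContDiffOn ℝ 2 w (Set.Icc x₀ (x₀ + c) ×ˢ Set.Icc y₀ (y₀ + c)) →
      ((∀ p ∈ Set.Icc x₀ (x₀ + c) ×ˢ Set.Icc y₀ (y₀ + c),
          m ≤ deriv (fun x => deriv (fun y => w (x, y)) p.2) p.1) ∨
        (∀ p ∈ Set.Icc x₀ (x₀ + c) ×ˢ Set.Icc y₀ (y₀ + c),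
          deriv (fun x => deriv (fun y => w (x, y)) p.2) p.1 ≤ -m)) →
      (∫ p in Set.Icc x₀ (x₀ + c) ×ˢ Set.Icc y₀ (y₀ + c), ‖fderiv ℝ w p‖ ^ 2) ≤ η ^ 2 →
      m ≤ C * η / c ^ 2 := by
  refine ⟨4, by norm_num, ?_⟩
  intro w x₀ y₀ c m η hc hm hη hw hsign hL2
  set s : Set ℝ := Set.Icc x₀ (x₀ + c) with hs
  set t : Set ℝ := Set.Icc y₀ (y₀ + c) with ht
  set B : Set (ℝ × ℝ) := s ×ˢ t with hB
  have hBint : interior B = Set.Ioo x₀ (x₀ + c) ×ˢ Set.Ioo y₀ (y₀ + c) := by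
    rw [hB, interior_prod_eq, hs, ht, interior_Icc, interior_Icc]
  have hBu : UniqueDiffOn ℝ B := by
    apply uniqueDiffOn_convex ((convex_Icc _ _).prod (convex_Icc _ _))
    rw [hBint]
    exact (Set.nonempty_Ioo.2 (by linarith)).prod (Set.nonempty_Ioo.2 (by linarith))
  have hBc : IsCompact B := isCompact_Icc.prod isCompact_Icc
  have hBm : MeasurableSet B := (measurableSet_Icc.prod measurableSet_Icc)
  set Φ : ℝ × ℝ → ℝ := fun p => fderivWithin ℝ w B p ((0:ℝ), (1:ℝ)) with hΦ
  have hfdc : ContinuousOn (fderivWithin ℝ w B) B :=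
    hw.continuousOn_fderivWithin hBu one_le_two
  have hΦc : ContinuousOn Φ B := by
    exact (ContinuousLinearMap.apply ℝ ℝ ((0:ℝ), (1:ℝ))).continuous.comp_continuousOn hfdc
  have hdiff : ∀ p ∈ interior B, DifferentiableAt ℝ w p ∧ fderiv ℝ w p = fderivWithin ℝ w B p := by
    intro p hp
    have hn : B ∈ nhds p := mem_interior_iff_mem_nhds.1 hp
    have hd : DifferentiableAt ℝ w p := (hw.differentiableOn two_ne_zero).differentiableAt hn
    exact ⟨hd, (fderivWithin_of_mem_nhds hn).symm⟩
  -- the complement of the interior inside B is null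
  have hnull : volume (B \ interior B) = 0 := by
    have hsub : B \ interior B ⊆
        ((Set.Icc x₀ (x₀+c) \ Set.Ioo x₀ (x₀+c)) ×ˢ (Set.univ : Set ℝ)) ∪
        ((Set.univ : Set ℝ) ×ˢ (Set.Icc y₀ (y₀+c) \ Set.Ioo y₀ (y₀+c))) := by
      rintro ⟨px, py⟩ ⟨hpB, hpI⟩
      rw [hBint] at hpI
      simp only [Set.mem_prod] at hpI hpB ⊢
      by_cases hx : px ∈ Set.Ioo x₀ (x₀+c)
      · right; exact ⟨trivial, hpB.2, fun hy => hpI ⟨hx, hy⟩⟩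
      · left; exact ⟨⟨hpB.1, hx⟩, trivial⟩
    apply measure_mono_null hsub
    apply measure_union_null
    · rw [Measure.volume_eq_prod, Measure.prod_prod]
      have : volume (Set.Icc x₀ (x₀+c) \ Set.Ioo x₀ (x₀+c)) = 0 := by
        rw [Set.Icc_diff_Ioo_same (by linarith)]
        exact Set.Finite.measure_zero (Set.toFinite _) volume
      rw [this, zero_mul]
    · rw [Measure.volume_eq_prod, Measure.prod_prod]
      have : volume (Set.Icc y₀ (y₀+c) \ Set.Ioo y₀ (y₀+c)) = 0 := by
        rw [Set.Icc_diff_Ioo_same (by linarith)]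
        exact Set.Finite.measure_zero (Set.toFinite _) volume
      rw [this, mul_zero]
  have hae : ∀ᵐ p ∂(volume.restrict B), p ∈ interior B := by
    have h0 : ∀ᵐ p ∂(volume : Measure (ℝ × ℝ)), p ∉ B \ interior B :=
      measure_eq_zero_iff_ae_notMem.mp hnull
    filter_upwards [ae_restrict_mem hBm, ae_restrict_of_ae h0] with p h1 h2
    by_contra h
    exact h2 ⟨h1, h⟩
  -- integrability of the continuous pieces
  have hΦabs_int : IntegrableOn (fun p => |Φ p|) B volume :=
    (hΦc.abs).integrableOn_compact hBc
  have hΦsq_int : IntegrableOn (fun p => (Φ p) ^ 2) B volume :=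
    (hΦc.pow 2).integrableOn_compact hBc
  have haeq : ∀ᵐ p ∂(volume.restrict B), Φ p = fderiv ℝ w p ((0:ℝ), (1:ℝ)) := by
    filter_upwards [hae] with p hp
    rw [hΦ]
    simp only
    rw [(hdiff p hp).2]
  have hnorm01 : ‖((0:ℝ), (1:ℝ))‖ = 1 := by
    simp [Prod.norm_def]
  have hptwise : ∀ᵐ p ∂(volume.restrict B), (Φ p) ^ 2 ≤ ‖fderiv ℝ w p‖ ^ 2 := by
    filter_upwards [haeq] with p hp
    have h1 : |Φ p| ≤ ‖fderiv ℝ w p‖ := by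
      rw [hp]
      calc |fderiv ℝ w p ((0:ℝ), (1:ℝ))| = ‖fderiv ℝ w p ((0:ℝ), (1:ℝ))‖ := rfl
        _ ≤ ‖fderiv ℝ w p‖ * ‖((0:ℝ), (1:ℝ))‖ := (fderiv ℝ w p).le_opNorm _
        _ = ‖fderiv ℝ w p‖ := by rw [hnorm01, mul_one]
    nlinarith [abs_nonneg (Φ p), sq_abs (Φ p), norm_nonneg (fderiv ℝ w p)]
  have hfint : IntegrableOn (fun p => ‖fderiv ℝ w p‖ ^ 2) B volume := by
    have hgood : IntegrableOn (fun p => ‖fderivWithin ℝ w B p‖ ^ 2) B volume :=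
      ((hfdc.norm).pow 2).integrableOn_compact hBc
    apply hgood.congr
    filter_upwards [hae] with p hp
    rw [(hdiff p hp).2]
  have hI2 : (∫ p in B, (Φ p) ^ 2) ≤ η ^ 2 :=
    le_trans (integral_mono_ae hΦsq_int hfint hptwise) hL2
  -- Fubini
  have hrestr : (volume.restrict s).prod (volume.restrict t)
      = (volume : Measure (ℝ × ℝ)).restrict B := by
    rw [Measure.prod_restrict, ← Measure.volume_eq_prod]
  have hΦabs_int' : Integrable (fun p => |Φ p|)
      ((volume.restrict s).prod (volume.restrict t)) := by
    rw [hrestr]; exact hΦabs_int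
  have hFub : (∫ p in B, |Φ p|) = ∫ y in t, ∫ x in s, |Φ (x, y)| := by
    rw [← hrestr]
    exact integral_prod_symm _ hΦabs_int'
  -- a.e. interior for one-dimensional restrictions
  have haeI : ∀ (a : ℝ), ∀ᵐ x ∂(volume.restrict (Set.Icc a (a + c))), x ∈ Set.Ioo a (a + c) := by
    intro a
    have h0 : ∀ᵐ x ∂(volume : Measure ℝ), x ∉ (Set.Icc a (a + c) \ Set.Ioo a (a + c)) := by
      have : volume (Set.Icc a (a + c) \ Set.Ioo a (a + c)) = 0 := by
        rw [Set.Icc_diff_Ioo_same (by linarith : a ≤ a + c)]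
        exact Set.Finite.measure_zero (Set.toFinite _) volume
      exact measure_eq_zero_iff_ae_notMem.mp this
    filter_upwards [ae_restrict_mem measurableSet_Icc, ae_restrict_of_ae h0] with x h1 h2
    by_contra hxx
    exact h2 ⟨h1, hxx⟩
  -- inner bound for each interior y
  have hinner : ∀ y ∈ Set.Ioo y₀ (y₀ + c), m * c ^ 2 / 4 ≤ ∫ x in s, |Φ (x, y)| := by
    intro y hy
    set g : ℝ → ℝ := fun x => deriv (fun y' => w (x, y')) y with hg
    have hgbound : m * c ^ 2 / 4 ≤ ∫ x in Set.Icc x₀ (x₀ + c), |g x| := by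
      rcases hsign with hpos | hneg
      · exact oneD g x₀ c m hc hm
          (fun x hx => hpos (x, y) ⟨hx, Set.Ioo_subset_Icc_self hy⟩)
      · have hneg' : ∀ x ∈ Set.Icc x₀ (x₀ + c), m ≤ deriv (fun x => -g x) x := by
          intro x hx
          have h2 := hneg (x, y) ⟨hx, Set.Ioo_subset_Icc_self hy⟩
          have : deriv (fun x => -g x) x = -deriv g x := deriv.neg
          rw [this]
          simp only [hg] at h2 ⊢
          linarith
        have := oneD (fun x => -g x) x₀ c m hc hm hneg'
        simpa [abs_neg] using this
    have heq : (∫ x in s, |Φ (x, y)|) = ∫ x in Set.Icc x₀ (x₀ + c), |g x| := by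
      rw [hs]
      apply integral_congr_ae
      filter_upwards [haeI x₀] with x hx
      have hpI : (x, y) ∈ interior B := by rw [hBint]; exact ⟨hx, hy⟩
      obtain ⟨hd, hfd⟩ := hdiff _ hpI
      have hsd := sliceDeriv w (x, y) hd
      simp only [hΦ, hg]
      rw [← hfd]
      rw [← hsd]
    rw [heq]
    exact hgbound
  -- outer integration
  have houter_int : Integrable (fun y => ∫ x in s, |Φ (x, y)|) (volume.restrict t) :=
    hΦabs_int'.integral_prod_right
  have hvolt : volume t < ⊤ := isCompact_Icc.measure_lt_top
  have houter : (∫ _ in t, (m * c ^ 2 / 4)) ≤ ∫ y in t, ∫ x in s, |Φ (x, y)| := by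
    apply integral_mono_ae (by exact integrableOn_const (C := m * c ^ 2 / 4) hvolt.ne) houter_int
    have haeT : ∀ᵐ y ∂(volume.restrict t), y ∈ Set.Ioo y₀ (y₀ + c) := by rw [ht]; exact haeI y₀
    filter_upwards [haeT] with y hy
    exact hinner y hy
  have hconstT : (∫ _ in t, (m * c ^ 2 / 4)) = c * (m * c ^ 2 / 4) := by
    rw [setIntegral_const, smul_eq_mul, ht, measureReal_def, Real.volume_Icc]
    congr 1
    rw [show y₀ + c - y₀ = c by ring, ENNReal.toReal_ofReal hc.le]
  have hI1 : m * c ^ 3 / 4 ≤ ∫ p in B, |Φ p| := by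
    rw [hFub]
    calc m * c ^ 3 / 4 = c * (m * c ^ 2 / 4) := by ring
      _ = _ := hconstT.symm
      _ ≤ _ := houter
  -- combine
  have hI2nn : 0 ≤ ∫ p in B, (Φ p) ^ 2 := integral_nonneg fun p => sq_nonneg _
  have hvolB : ((volume : Measure (ℝ × ℝ)) B).toReal = c * c := by
    rw [hB, Measure.volume_eq_prod, Measure.prod_prod, hs, ht, Real.volume_Icc, Real.volume_Icc,
      show x₀ + c - x₀ = c by ring, show y₀ + c - y₀ = c by ring,
      ← ENNReal.ofReal_mul hc.le, ENNReal.toReal_ofReal (by nlinarith)]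
  have hkey : m * c ^ 3 / 4 ≤ c * η := by
    rcases eq_or_lt_of_le hη with h0 | hposη
    · -- η = 0 : Φ vanishes a.e.
      have hI2z : (∫ p in B, (Φ p) ^ 2) = 0 := le_antisymm (by rw [← h0] at hI2; simpa using hI2) hI2nn
      have hzero : (fun p => (Φ p) ^ 2) =ᵐ[volume.restrict B] 0 :=
        (integral_eq_zero_iff_of_nonneg (fun p => sq_nonneg _) hΦsq_int).1 hI2z
      have hzero' : (fun p => |Φ p|) =ᵐ[volume.restrict B] 0 := by
        filter_upwards [hzero] with p hp
        simp only [Pi.zero_apply] at hp ⊢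
        have := sq_eq_zero_iff.1 hp
        simp [this]
      have : (∫ p in B, |Φ p|) = 0 := by
        rw [integral_congr_ae hzero']
        simp
      rw [this] at hI1
      nlinarith
    · -- η > 0
      have hpt : ∀ p, |Φ p| ≤ (c / (2 * η)) * (Φ p) ^ 2 + η / (2 * c) := by
        intro p
        have h2 : (Φ p) ^ 2 = |Φ p| ^ 2 := (sq_abs _).symm
        rw [← sub_nonneg, h2]
        generalize |Φ p| = A
        have e1 : (c / (2 * η)) * A ^ 2 + η / (2 * c) - A
            = (c * A - η) ^ 2 / (2 * η * c) := by
          field_simp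
          ring
        rw [e1]
        positivity
      have hRHSint : IntegrableOn (fun p => (c / (2 * η)) * (Φ p) ^ 2 + η / (2 * c)) B volume :=
        (hΦsq_int.const_mul _).add (integrableOn_const hBc.measure_lt_top.ne)
      have h3 : (∫ p in B, |Φ p|) ≤ ∫ p in B, ((c / (2 * η)) * (Φ p) ^ 2 + η / (2 * c)) :=
        integral_mono hΦabs_int hRHSint fun p => hpt p
      have h4 : (∫ p in B, ((c / (2 * η)) * (Φ p) ^ 2 + η / (2 * c)))
          = (c / (2 * η)) * (∫ p in B, (Φ p) ^ 2) + (c * c) * (η / (2 * c)) := by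
        rw [integral_add (hΦsq_int.const_mul _) (integrableOn_const hBc.measure_lt_top.ne),
          integral_const_mul, setIntegral_const, smul_eq_mul, measureReal_def, hvolB]
      have h5 : (c / (2 * η)) * (∫ p in B, (Φ p) ^ 2) ≤ (c / (2 * η)) * η ^ 2 :=
        mul_le_mul_of_nonneg_left hI2 (by positivity)
      have h6 : (c / (2 * η)) * η ^ 2 + (c * c) * (η / (2 * c)) = c * η := by
        field_simp
        ring
      calc m * c ^ 3 / 4 ≤ ∫ p in B, |Φ p| := hI1
        _ ≤ _ := h3
        _ = _ := h4
        _ ≤ (c / (2 * η)) * η ^ 2 + (c * c) * (η / (2 * c)) := by linarith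
        _ = c * η := h6
  have hc2 : (0:ℝ) < c ^ 2 := by positivity
  rw [le_div_iff₀ hc2]
  nlinarith [hkey, hc, mul_pos hc hc]
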